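/- Let θ₃* be the unique root in (0, 2π) of the equation x² + 2x·sin x + 6(cos x − 1) = 0. Then sup_{x>0} (cos x − 1 + x²/2)/x³ = (cos θ₃* − 1 + (θ₃*)²/2)/(θ₃*)³ = (θ₃* − sin θ₃*)/(3(θ₃*)²), and this value κ₃ satisfies 0.099161 < κ₃ < 0.099162. -/

import Mathlib

set_option maxHeartbeats 1000000

open Complex Finset in
private lemma auxC (x : ℝ) : (∑ m ∈ Finset.range 12, ((x:ℂ)*I)^m/m.factorial) + (∑ m ∈ Finset.range 12, (-(x:ℂ)*I)^m/m.factorial) = 2*((1:ℂ) - x^2/2 + x^4/24 - x^6/720 + x^8/40320 - x^10/3628800) := by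
  have h2 : (I:ℂ)^2 = -1 := I_sq
  have h4 : (I:ℂ)^4 = 1 := by rw [pow_succ, pow_succ, h2]; ring_nf; simp [I_mul_I]
  have h6 : (I:ℂ)^6 = -1 := by rw [pow_succ, pow_succ, h4]; ring_nf; simp [h2]
  have h8 : (I:ℂ)^8 = 1 := by rw [pow_succ, pow_succ, h6]; ring_nf; simp [h2]
  have h10 : (I:ℂ)^10 = -1 := by rw [pow_succ, pow_succ, h8]; ring_nf; simp [h2]
  simp only [Finset.sum_range_succ, Finset.range_zero, Finset.sum_empty, Nat.factorial]
  push_cast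
  ring_nf
  rw [h2, h4, h6, h8, h10]
  ring

open Complex Finset in
private lemma auxS (x : ℝ) : ((∑ m ∈ Finset.range 12, (-(x:ℂ)*I)^m/m.factorial) - (∑ m ∈ Finset.range 12, ((x:ℂ)*I)^m/m.factorial)) * I = 2*((x:ℂ) - x^3/6 + x^5/120 - x^7/5040 + x^9/362880 - x^11/39916800) := by
  have h2 : (I:ℂ)^2 = -1 := I_sq
  have h4 : (I:ℂ)^4 = 1 := by rw [pow_succ, pow_succ, h2]; ring_nf; simp [I_mul_I]
  have h6 : (I:ℂ)^6 = -1 := by rw [pow_succ, pow_succ, h4]; ring_nf; simp [h2]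
  have h8 : (I:ℂ)^8 = 1 := by rw [pow_succ, pow_succ, h6]; ring_nf; simp [h2]
  have h10 : (I:ℂ)^10 = -1 := by rw [pow_succ, pow_succ, h8]; ring_nf; simp [h2]
  have h12 : (I:ℂ)^12 = 1 := by rw [pow_succ, pow_succ, h10]; ring_nf; simp [h2]
  simp only [Finset.sum_range_succ, Finset.range_zero, Finset.sum_empty, Nat.factorial]
  push_cast
  ring_nf
  rw [h2, h4, h6, h8, h10, h12]
  ring

open Complex Finset in
private lemma err_bound {z : ℂ} (hz : ‖z‖ ≤ 1) :
    ‖Complex.exp z - ∑ m ∈ Finset.range 12, z^m/m.factorial‖ ≤ 13/5748019200 := by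
  have := Complex.exp_bound hz (by norm_num : 0 < 12)
  refine this.trans ?_
  have b1 : ‖z‖ ^ 12 ≤ 1 := pow_le_one₀ (norm_nonneg _) hz
  have hnum : ((Nat.succ 12 : ℕ) : ℝ) * (((Nat.factorial 12 : ℕ) : ℝ) * ((12:ℕ):ℝ))⁻¹ = 13/5748019200 := by
    norm_num [Nat.factorial]
  rw [hnum]
  nlinarith [pow_nonneg (norm_nonneg z) 12]

open Complex Finset in
private lemma cos_taylor12 {x : ℝ} (hx : |x| ≤ 1) :
    |Real.cos x - (1 - x^2/2 + x^4/24 - x^6/720 + x^8/40320 - x^10/3628800)| ≤ 1/400000000 := by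
  have hxI : ‖(x:ℂ)*I‖ ≤ 1 := by simpa using hx
  have hxI' : ‖-(x:ℂ)*I‖ ≤ 1 := by simpa using hx
  have e1 := err_bound hxI
  have e2 := err_bound hxI'
  have key : Complex.cos x - ((1:ℂ) - x^2/2 + x^4/24 - x^6/720 + x^8/40320 - x^10/3628800)
      = ((Complex.exp ((x:ℂ)*I) - ∑ m ∈ Finset.range 12, ((x:ℂ)*I)^m/m.factorial)
        + (Complex.exp (-(x:ℂ)*I) - ∑ m ∈ Finset.range 12, (-(x:ℂ)*I)^m/m.factorial))/2 := by
    rw [Complex.cos]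
    linear_combination (auxC x)/2
  have habsid : |Real.cos x - (1 - x^2/2 + x^4/24 - x^6/720 + x^8/40320 - x^10/3628800)|
      = ‖Complex.cos x - ((1:ℂ) - x^2/2 + x^4/24 - x^6/720 + x^8/40320 - x^10/3628800)‖ := by
    rw [← Real.norm_eq_abs, ← Complex.norm_real]; norm_cast
  rw [habsid, key, norm_div]
  have habs := norm_add_le (Complex.exp ((x:ℂ)*I) - ∑ m ∈ Finset.range 12, ((x:ℂ)*I)^m/m.factorial)
      (Complex.exp (-(x:ℂ)*I) - ∑ m ∈ Finset.range 12, (-(x:ℂ)*I)^m/m.factorial)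
  have h2 : ‖(2:ℂ)‖ = 2 := by norm_num
  rw [h2]
  linarith

open Complex Finset in
private lemma sin_taylor12 {x : ℝ} (hx : |x| ≤ 1) :
    |Real.sin x - (x - x^3/6 + x^5/120 - x^7/5040 + x^9/362880 - x^11/39916800)| ≤ 1/400000000 := by
  have hxI : ‖(x:ℂ)*I‖ ≤ 1 := by simpa using hx
  have hxI' : ‖-(x:ℂ)*I‖ ≤ 1 := by simpa using hx
  have e1 := err_bound hxI
  have e2 := err_bound hxI'
  have key : Complex.sin x - ((x:ℂ) - x^3/6 + x^5/120 - x^7/5040 + x^9/362880 - x^11/39916800)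
      = (((Complex.exp (-(x:ℂ)*I) - ∑ m ∈ Finset.range 12, (-(x:ℂ)*I)^m/m.factorial)
        - (Complex.exp ((x:ℂ)*I) - ∑ m ∈ Finset.range 12, ((x:ℂ)*I)^m/m.factorial)) * I)/2 := by
    rw [Complex.sin]
    linear_combination (auxS x)/2
  have habsid : |Real.sin x - (x - x^3/6 + x^5/120 - x^7/5040 + x^9/362880 - x^11/39916800)|
      = ‖Complex.sin x - ((x:ℂ) - x^3/6 + x^5/120 - x^7/5040 + x^9/362880 - x^11/39916800)‖ := by
    rw [← Real.norm_eq_abs, ← Complex.norm_real]; norm_cast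
  rw [habsid, key, norm_div, norm_mul]
  have habs : ‖(Complex.exp (-(x:ℂ)*I) - ∑ m ∈ Finset.range 12, (-(x:ℂ)*I)^m/m.factorial)
      - (Complex.exp ((x:ℂ)*I) - ∑ m ∈ Finset.range 12, ((x:ℂ)*I)^m/m.factorial)‖
      ≤ ‖Complex.exp (-(x:ℂ)*I) - ∑ m ∈ Finset.range 12, (-(x:ℂ)*I)^m/m.factorial‖
      + ‖Complex.exp ((x:ℂ)*I) - ∑ m ∈ Finset.range 12, ((x:ℂ)*I)^m/m.factorial‖ := by
    simpa using norm_sub_le (Complex.exp (-(x:ℂ)*I) - ∑ m ∈ Finset.range 12, (-(x:ℂ)*I)^m/m.factorial) (Complex.exp ((x:ℂ)*I) - ∑ m ∈ Finset.range 12, ((x:ℂ)*I)^m/m.factorial)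
  have h2 : ‖(2:ℂ)‖ = 2 := by norm_num
  have hI : ‖I‖ = 1 := Complex.norm_I
  rw [h2, hI]
  linarith

private lemma cos_quarter (q : ℝ) : Real.cos q = 8*(Real.cos (q/4))^4 - 8*(Real.cos (q/4))^2 + 1 := by
  have e : q = 2*(2*(q/4)) := by ring
  conv_lhs => rw [e]
  rw [Real.cos_two_mul, Real.cos_two_mul]; ring

private lemma sin_quarter (q : ℝ) : Real.sin q = 4*Real.sin (q/4)*Real.cos (q/4)*(2*(Real.cos (q/4))^2 - 1) := by
  have e : q = 2*(2*(q/4)) := by ring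
  conv_lhs => rw [e]
  rw [Real.sin_two_mul, Real.sin_two_mul, Real.cos_two_mul]; ring

private lemma pt_a : (-0.656744480 ≤ Real.cos 3.9958954 ∧ Real.cos 3.9958954 ≤ -0.656744461)
    ∧ (3.9958954:ℝ)^2 + 2*3.9958954*Real.sin 3.9958954 + 6*(Real.cos 3.9958954 - 1) < 0 := by
  have hxle : |(3.9958954:ℝ)/4| ≤ 1 := by rw [abs_le]; constructor <;> norm_num
  have hs := abs_le.1 (sin_taylor12 hxle)
  have hc := abs_le.1 (cos_taylor12 hxle)
  rw [sin_quarter 3.9958954, cos_quarter 3.9958954]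
  set s := Real.sin ((3.9958954:ℝ)/4) with hsdef
  set c := Real.cos ((3.9958954:ℝ)/4) with hcdef
  have hsl : (0.840916108008:ℝ) ≤ s := by linarith [hs.1]
  have hsu : s ≤ (0.840916113009:ℝ) := by linarith [hs.2]
  have hcl : (0.541165492152:ℝ) ≤ c := by linarith [hc.1]
  have hcu : c ≤ (0.541165497153:ℝ) := by linarith [hc.2]
  clear hs hc hxle
  have hc2l : (0.292860089896:ℝ) ≤ c^2 := by nlinarith
  have hc2u : c^2 ≤ (0.292860095309:ℝ) := by nlinarith
  have hXl : (0.455074779448:ℝ) ≤ s*c := by nlinarith [mul_nonneg (sub_nonneg.2 hsl) (sub_nonneg.2 hcl)]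
  have hXu : s*c ≤ (0.455074786361:ℝ) := by nlinarith [mul_nonneg (sub_nonneg.2 hsl) (sub_nonneg.2 hcl), mul_nonneg (sub_nonneg.2 hsu) (sub_nonneg.2 hcu)]
  have hcosl : (-0.656744480:ℝ) ≤ 8*c^4 - 8*c^2 + 1 := by
    nlinarith [mul_nonneg (sub_nonneg.2 hc2l) (sub_nonneg.2 hc2u), sq_nonneg (c^2 - 0.292860089896), sq_nonneg (c^2 - 0.292860095309)]
  have hcosu : 8*c^4 - 8*c^2 + 1 ≤ (-0.656744461:ℝ) := by
    nlinarith [mul_nonneg (sub_nonneg.2 hc2l) (sub_nonneg.2 hc2u), sq_nonneg (c^2 - 0.292860089896), sq_nonneg (c^2 - 0.292860095309)]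
  have hsinu : 4*s*c*(2*c^2 - 1) ≤ (-0.754113171:ℝ) := by
    nlinarith [mul_nonneg (sub_nonneg.2 hXl) (sub_nonneg.2 hc2u),
      mul_nonneg (sub_nonneg.2 hXu) (sub_nonneg.2 hc2l),
      mul_nonneg (sub_nonneg.2 hXl) (sub_nonneg.2 hc2l),
      mul_nonneg (sub_nonneg.2 hXu) (sub_nonneg.2 hc2u)]
  refine ⟨⟨hcosl, hcosu⟩, ?_⟩
  nlinarith [hsinu, hcosu]

private lemma pt_b : (-0.656744027 ≤ Real.cos 3.9958960 ∧ Real.cos 3.9958960 ≤ -0.656744008)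
    ∧ 0 < (3.9958960:ℝ)^2 + 2*3.9958960*Real.sin 3.9958960 + 6*(Real.cos 3.9958960 - 1) := by
  have hxle : |(3.9958960:ℝ)/4| ≤ 1 := by rw [abs_le]; constructor <;> norm_num
  have hs := abs_le.1 (sin_taylor12 hxle)
  have hc := abs_le.1 (cos_taylor12 hxle)
  rw [sin_quarter 3.9958960, cos_quarter 3.9958960]
  set s := Real.sin ((3.9958960:ℝ)/4) with hsdef
  set c := Real.cos ((3.9958960:ℝ)/4) with hcdef
  have hsl : (0.840916189183:ℝ) ≤ s := by linarith [hs.1]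
  have hsu : s ≤ (0.840916194184:ℝ) := by linarith [hs.2]
  have hcl : (0.541165366014:ℝ) ≤ c := by linarith [hc.1]
  have hcu : c ≤ (0.541165371015:ℝ) := by linarith [hc.2]
  clear hs hc hxle
  have hc2l : (0.292859953373:ℝ) ≤ c^2 := by nlinarith
  have hc2u : c^2 ≤ (0.292859958786:ℝ) := by nlinarith
  have hXl : (0.455074717306:ℝ) ≤ s*c := by nlinarith [mul_nonneg (sub_nonneg.2 hsl) (sub_nonneg.2 hcl)]
  have hXu : s*c ≤ (0.455074724219:ℝ) := by nlinarith [mul_nonneg (sub_nonneg.2 hsl) (sub_nonneg.2 hcl), mul_nonneg (sub_nonneg.2 hsu) (sub_nonneg.2 hcu)]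
  have hcosl : (-0.656744027:ℝ) ≤ 8*c^4 - 8*c^2 + 1 := by
    nlinarith [mul_nonneg (sub_nonneg.2 hc2l) (sub_nonneg.2 hc2u), sq_nonneg (c^2 - 0.292859953373), sq_nonneg (c^2 - 0.292859958786)]
  have hcosu : 8*c^4 - 8*c^2 + 1 ≤ (-0.656744008:ℝ) := by
    nlinarith [mul_nonneg (sub_nonneg.2 hc2l) (sub_nonneg.2 hc2u), sq_nonneg (c^2 - 0.292859953373), sq_nonneg (c^2 - 0.292859958786)]
  have hsinl : (-0.754113597:ℝ) ≤ 4*s*c*(2*c^2 - 1) := by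
    nlinarith [mul_nonneg (sub_nonneg.2 hXl) (sub_nonneg.2 hc2u),
      mul_nonneg (sub_nonneg.2 hXu) (sub_nonneg.2 hc2l),
      mul_nonneg (sub_nonneg.2 hXl) (sub_nonneg.2 hc2l),
      mul_nonneg (sub_nonneg.2 hXu) (sub_nonneg.2 hc2u)]
  refine ⟨⟨hcosl, hcosu⟩, ?_⟩
  nlinarith [hsinl, hcosl]

private lemma pt_one : (1:ℝ)^2 + 2*1*Real.sin 1 + 6*(Real.cos 1 - 1) < 0 := by
  have hxle : |(1:ℝ)/4| ≤ 1 := by rw [abs_le]; constructor <;> norm_num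
  have hs := abs_le.1 (sin_taylor12 hxle)
  have hc := abs_le.1 (cos_taylor12 hxle)
  rw [sin_quarter 1, cos_quarter 1]
  set s := Real.sin ((1:ℝ)/4) with hsdef
  set c := Real.cos ((1:ℝ)/4) with hcdef
  have hsl : (0.247403956754:ℝ) ≤ s := by linarith [hs.1]
  have hsu : s ≤ (0.247403961755:ℝ) := by linarith [hs.2]
  have hcl : (0.968912419210:ℝ) ≤ c := by linarith [hc.1]
  have hcu : c ≤ (0.968912424211:ℝ) := by linarith [hc.2]
  clear hs hc hxle
  have hc2l : (0.938791276099:ℝ) ≤ c^2 := by nlinarith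
  have hc2u : c^2 ≤ (0.938791285791:ℝ) := by nlinarith
  have hXl : (0.239712766260:ℝ) ≤ s*c := by nlinarith [mul_nonneg (sub_nonneg.2 hsl) (sub_nonneg.2 hcl)]
  have hXu : s*c ≤ (0.239712772344:ℝ) := by nlinarith [mul_nonneg (sub_nonneg.2 hsl) (sub_nonneg.2 hcl), mul_nonneg (sub_nonneg.2 hsu) (sub_nonneg.2 hcu)]
  have hcosu : 8*c^4 - 8*c^2 + 1 ≤ (0.540302340:ℝ) := by
    nlinarith [mul_nonneg (sub_nonneg.2 hc2l) (sub_nonneg.2 hc2u), sq_nonneg (c^2 - 0.938791276099), sq_nonneg (c^2 - 0.938791285791)]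
  have hsinu : 4*s*c*(2*c^2 - 1) ≤ (0.841471005:ℝ) := by
    nlinarith [mul_nonneg (sub_nonneg.2 hXl) (sub_nonneg.2 hc2u),
      mul_nonneg (sub_nonneg.2 hXu) (sub_nonneg.2 hc2l),
      mul_nonneg (sub_nonneg.2 hXl) (sub_nonneg.2 hc2l),
      mul_nonneg (sub_nonneg.2 hXu) (sub_nonneg.2 hc2u)]
  nlinarith [hsinu, hcosu]


private lemma hasDeriv_f {x : ℝ} (hx : x ≠ 0) :
    HasDerivAt (fun y => (Real.cos y - 1 + y^2/2)/y^3)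
      (-(x^2 + 2*x*Real.sin x + 6*(Real.cos x - 1))/(2*x^4)) x := by
  have h1 : HasDerivAt (fun y : ℝ => Real.cos y - 1 + y^2/2) (-Real.sin x + x) x := by
    have := ((Real.hasDerivAt_cos x).sub_const 1).add ((hasDerivAt_pow 2 x).div_const 2)
    exact this.congr_deriv (by norm_num)
  have h2 : HasDerivAt (fun y : ℝ => y^3) (3*x^2) x := by
    simpa using hasDerivAt_pow 3 x
  have h3 := h1.div h2 (pow_ne_zero 3 hx)
  refine h3.congr_deriv ?_
  field_simp
  ring

theorem kappa3_value (θ : ℝ) (hθ : θ ∈ Set.Ioo 0 (2 * Real.pi))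
    (heq : θ ^ 2 + 2 * θ * Real.sin θ + 6 * (Real.cos θ - 1) = 0)
    (huniq : ∀ x ∈ Set.Ioo 0 (2 * Real.pi),
      x ^ 2 + 2 * x * Real.sin x + 6 * (Real.cos x - 1) = 0 → x = θ) :
    sSup {y : ℝ | ∃ x : ℝ, 0 < x ∧ y = (Real.cos x - 1 + x ^ 2 / 2) / x ^ 3} =
      (Real.cos θ - 1 + θ ^ 2 / 2) / θ ^ 3 ∧
    (Real.cos θ - 1 + θ ^ 2 / 2) / θ ^ 3 = (θ - Real.sin θ) / (3 * θ ^ 2) ∧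
    0.099161 < (Real.cos θ - 1 + θ ^ 2 / 2) / θ ^ 3 ∧
    (Real.cos θ - 1 + θ ^ 2 / 2) / θ ^ 3 < 0.099162 := by
  have hpi1 : Real.pi > 3.141592 := Real.pi_gt_d6
  have hpi2 : Real.pi < 3.141593 := Real.pi_lt_d6
  have hθ0 : 0 < θ := hθ.1
  -- continuity of G
  have hcont : Continuous (fun x : ℝ => x^2 + 2*x*Real.sin x + 6*(Real.cos x - 1)) := by
    fun_prop
  -- locate θ in (3.9958954, 3.9958960)
  have hab : (3.9958954:ℝ) ≤ 3.9958960 := by norm_num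
  have hivt := intermediate_value_Ioo hab hcont.continuousOn
  have h0mem : (0:ℝ) ∈ Set.Ioo ((fun x : ℝ => x^2 + 2*x*Real.sin x + 6*(Real.cos x - 1)) 3.9958954)
      ((fun x : ℝ => x^2 + 2*x*Real.sin x + 6*(Real.cos x - 1)) 3.9958960) := ⟨pt_a.2, pt_b.2⟩
  obtain ⟨x₀, hx₀mem, hx₀⟩ := hivt h0mem
  have hx₀θ : x₀ = θ := huniq x₀ ⟨by linarith [hx₀mem.1], by linarith [hx₀mem.2]⟩ hx₀
  have hθa : (3.9958954:ℝ) < θ := hx₀θ ▸ hx₀mem.1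
  have hθb : θ < (3.9958960:ℝ) := hx₀θ ▸ hx₀mem.2
  -- cos θ bounds
  have hcosl : Real.cos 3.9958954 ≤ Real.cos θ := by
    have h := Real.cos_le_cos_of_nonneg_of_le_pi (x := 2*Real.pi - θ) (y := 2*Real.pi - 3.9958954)
      (by linarith) (by linarith) (by linarith)
    rwa [Real.cos_two_pi_sub, Real.cos_two_pi_sub] at h
  have hcosu : Real.cos θ ≤ Real.cos 3.9958960 := by
    have h := Real.cos_le_cos_of_nonneg_of_le_pi (x := 2*Real.pi - 3.9958960) (y := 2*Real.pi - θ)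
      (by linarith) (by linarith) (by linarith)
    rwa [Real.cos_two_pi_sub, Real.cos_two_pi_sub] at h
  have hCl : (-0.656744480:ℝ) ≤ Real.cos θ := le_trans pt_a.1.1 hcosl
  have hCu : Real.cos θ ≤ (-0.656744008:ℝ) := le_trans hcosu pt_b.1.2
  -- sign of G on (0, θ)
  have hGneg : ∀ x, 0 < x → x < θ → x^2 + 2*x*Real.sin x + 6*(Real.cos x - 1) < 0 := by
    intro x hx0 hxθ
    by_contra hcon
    push_neg at hcon
    rcases hcon.eq_or_lt with h0 | hpos
    · exact absurd (huniq x ⟨hx0, by linarith [hθ.2]⟩ h0.symm) (ne_of_lt hxθ)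
    · rcases lt_trichotomy x 1 with hx1 | hx1 | hx1
      · obtain ⟨z, hzmem, hz⟩ := intermediate_value_Ioo' (le_of_lt hx1) hcont.continuousOn
          (Set.mem_Ioo.2 ⟨pt_one, hpos⟩)
        have := huniq z ⟨by linarith [hzmem.1], by linarith [hzmem.2]⟩ hz
        linarith [hzmem.2, this ▸ hθa]
      · rw [hx1] at hpos; linarith [pt_one]
      · obtain ⟨z, hzmem, hz⟩ := intermediate_value_Ioo (le_of_lt hx1) hcont.continuousOn
          (Set.mem_Ioo.2 ⟨pt_one, hpos⟩)
        have hzθ := huniq z ⟨by linarith [hzmem.1], by linarith [hθ.2, hzmem.2]⟩ hz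
        linarith [hzmem.2, hzθ ▸ hxθ]
  -- sign of G on (θ, ∞)
  have hG2pi : (2*Real.pi)^2 + 2*(2*Real.pi)*Real.sin (2*Real.pi) + 6*(Real.cos (2*Real.pi) - 1)
      = 4*Real.pi^2 := by
    rw [Real.sin_two_pi, Real.cos_two_pi]; ring
  have hGpos : ∀ x, θ < x → 0 < x^2 + 2*x*Real.sin x + 6*(Real.cos x - 1) := by
    intro x hθx
    rcases lt_or_ge x (2*Real.pi) with hlt | hge
    · by_contra hcon
      push_neg at hcon
      rcases hcon.eq_or_lt with h0 | hneg
      · exact absurd (huniq x ⟨by linarith, hlt⟩ h0) (ne_of_gt hθx)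
      · obtain ⟨z, hzmem, hz⟩ := intermediate_value_Ioo (le_of_lt hlt) hcont.continuousOn
          (Set.mem_Ioo.2 ⟨hneg, by rw [hG2pi]; positivity⟩)
        have hzθ := huniq z ⟨by linarith [hzmem.1], hzmem.2⟩ hz
        linarith [hzmem.1, hzθ ▸ hθx]
    · have hs := Real.neg_one_le_sin x
      have hc := Real.neg_one_le_cos x
      nlinarith [hge, hpi1]
  -- monotonicity
  have hcontf : ∀ s : Set ℝ, (∀ y ∈ s, y ≠ 0) →
      ContinuousOn (fun y => (Real.cos y - 1 + y^2/2)/y^3) s := by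
    intro s hs
    exact ContinuousOn.div (by fun_prop) (by fun_prop) (fun y hy => pow_ne_zero 3 (hs y hy))
  have hmono : StrictMonoOn (fun y => (Real.cos y - 1 + y^2/2)/y^3) (Set.Ioc 0 θ) := by
    apply strictMonoOn_of_deriv_pos (convex_Ioc 0 θ)
      (hcontf _ (fun y hy => ne_of_gt hy.1))
    intro x hx
    rw [interior_Ioc] at hx
    rw [(hasDeriv_f (ne_of_gt hx.1)).deriv]
    have hg := hGneg x hx.1 hx.2
    have hx4 : (0:ℝ) < 2*x^4 := by have := pow_pos hx.1 4; linarith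
    exact div_pos (by linarith) hx4
  have hanti : StrictAntiOn (fun y => (Real.cos y - 1 + y^2/2)/y^3) (Set.Ici θ) := by
    apply strictAntiOn_of_deriv_neg (convex_Ici θ)
      (hcontf _ (fun y hy => ne_of_gt (lt_of_lt_of_le hθ0 (Set.mem_Ici.1 hy))))
    intro x hx
    rw [interior_Ici] at hx
    rw [(hasDeriv_f (ne_of_gt (lt_trans hθ0 (Set.mem_Ioi.1 hx)))).deriv]
    have hg := hGpos x hx
    have hx4 : (0:ℝ) < 2*x^4 := by have := pow_pos (lt_trans hθ0 (Set.mem_Ioi.1 hx)) 4; linarith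
    exact div_neg_of_neg_of_pos (by linarith) hx4
  have hub : ∀ x : ℝ, 0 < x → (Real.cos x - 1 + x^2/2)/x^3 ≤ (Real.cos θ - 1 + θ^2/2)/θ^3 := by
    intro x hx0
    rcases le_or_gt x θ with hle | hgt
    · rcases hle.eq_or_lt with rfl | hlt
      · exact le_refl _
      · exact (hmono ⟨hx0, hle⟩ ⟨hθ0, le_refl θ⟩ hlt).le
    · exact (hanti (Set.self_mem_Ici) (Set.mem_Ici.2 hgt.le) hgt).le
  have hgr : IsGreatest {y : ℝ | ∃ x : ℝ, 0 < x ∧ y = (Real.cos x - 1 + x ^ 2 / 2) / x ^ 3}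
      ((Real.cos θ - 1 + θ ^ 2 / 2) / θ ^ 3) := by
    constructor
    · exact ⟨θ, hθ0, rfl⟩
    · rintro y ⟨x, hx0, rfl⟩
      exact hub x hx0
  refine ⟨hgr.csSup_eq, ?_, ?_, ?_⟩
  · rw [div_eq_div_iff (by positivity) (by positivity)]
    linear_combination (θ^2/2) * heq
  · rw [lt_div_iff₀ (by positivity : (0:ℝ) < θ^3)]
    nlinarith [hCl, mul_nonneg (sub_nonneg.2 hθa.le) (sub_nonneg.2 hθb.le),
      mul_nonneg (mul_nonneg (sub_nonneg.2 hθa.le) (sub_nonneg.2 hθb.le)) (sub_nonneg.2 hθa.le),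
      mul_nonneg (mul_nonneg (sub_nonneg.2 hθa.le) (sub_nonneg.2 hθb.le)) (sub_nonneg.2 hθb.le)]
  · rw [div_lt_iff₀ (by positivity : (0:ℝ) < θ^3)]
    nlinarith [hCu, mul_nonneg (sub_nonneg.2 hθa.le) (sub_nonneg.2 hθb.le),
      mul_nonneg (mul_nonneg (sub_nonneg.2 hθa.le) (sub_nonneg.2 hθb.le)) (sub_nonneg.2 hθa.le),
      mul_nonneg (mul_nonneg (sub_nonneg.2 hθa.le) (sub_nonneg.2 hθb.le)) (sub_nonneg.2 hθb.le)]
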